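/- Let G be a finite connected bipartite graph, and let d be a positive real root that is singular (i.e. some c_t(d) has a negative coordinate, where c_t are the alternating partial Coxeter transformations). Then there exists t ∈ ℤ and a vertex g with d = c_t(ē_g), where ē_g is the simple root at g. -/

import Mathlib

set_option linter.unusedSectionVars false
set_option maxHeartbeats 1000000


open Finset

/-- The partial Coxeter transformation: simultaneous reflection in all vertices
belonging to the part `P` of a bipartition. -/
def partCox {V : Type} [Fintype V] [DecidableEq V] (G : SimpleGraph V)
    [DecidableRel G.Adj] (P : V → Prop) [DecidablePred P] (x : V → ℝ) : V → ℝ :=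
  fun v => if P v then -x v + ∑ h ∈ G.neighborFinset v, x h else x v

/-- c_k for k > 0: alternating word of length k, rightmost factor c̄ (odd part). -/
def coxPos {V : Type} [Fintype V] [DecidableEq V] (G : SimpleGraph V)
    [DecidableRel G.Adj] (odd : V → Prop) [DecidablePred odd] :
    ℕ → (V → ℝ) → (V → ℝ)
  | 0 => id
  | k + 1 =>
      (if Even k then partCox G odd else partCox G (fun v => ¬ odd v)) ∘
        coxPos G odd k

/-- c_{−k} for k > 0: alternating word of length k, rightmost factor c̊ (even part). -/
def coxNeg {V : Type} [Fintype V] [DecidableEq V] (G : SimpleGraph V)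
    [DecidableRel G.Adj] (odd : V → Prop) [DecidablePred odd] :
    ℕ → (V → ℝ) → (V → ℝ)
  | 0 => id
  | k + 1 =>
      (if Even k then partCox G (fun v => ¬ odd v) else partCox G odd) ∘
        coxNeg G odd k

/-- c_t for t ∈ ℤ. -/
def coxZ {V : Type} [Fintype V] [DecidableEq V] (G : SimpleGraph V)
    [DecidableRel G.Adj] (odd : V → Prop) [DecidablePred odd] :
    ℤ → (V → ℝ) → (V → ℝ)
  | Int.ofNat k => coxPos G odd k
  | Int.negSucc k => coxNeg G odd (k + 1)

/-- The simple reflection σ_g. -/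
def reflV {V : Type} [Fintype V] [DecidableEq V] (G : SimpleGraph V)
    [DecidableRel G.Adj] (g : V) (x : V → ℝ) : V → ℝ :=
  fun v => if v = g then -x g + ∑ h ∈ G.neighborFinset g, x h else x v

namespace Stmt18Aux

variable {V : Type} [Fintype V] [DecidableEq V] (G : SimpleGraph V) [DecidableRel G.Adj]

/-! ### The bilinear form -/

/-- `bform g x = B(x, e_g)` where `B` is the symmetric bilinear form of the graph. -/
def bform (g : V) (x : V → ℝ) : ℝ := 2 * x g - ∑ h ∈ G.neighborFinset g, x h

lemma bform_add (g : V) (x y : V → ℝ) : bform G g (x + y) = bform G g x + bform G g y := by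
  simp only [bform, Pi.add_apply, Finset.sum_add_distrib]; ring

lemma bform_sub (g : V) (x y : V → ℝ) : bform G g (x - y) = bform G g x - bform G g y := by
  simp only [bform, Pi.sub_apply, Finset.sum_sub_distrib]; ring

lemma bform_smul (g : V) (c : ℝ) (x : V → ℝ) : bform G g (c • x) = c * bform G g x := by
  simp only [bform, Pi.smul_apply, smul_eq_mul, ← Finset.mul_sum]; ring

lemma bform_single (g g' : V) :
    bform G g (Pi.single g' (1:ℝ)) = if g' = g then 2 else if G.Adj g g' then -1 else 0 := by
  have hsum : ∑ h ∈ G.neighborFinset g, Pi.single g' (1:ℝ) h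
      = if g' ∈ G.neighborFinset g then 1 else 0 := Finset.sum_pi_single' g' 1 _
  unfold bform
  rw [hsum]
  rcases eq_or_ne g' g with rfl | hne
  · rw [Pi.single_eq_same, if_pos rfl,
      if_neg (by simp [SimpleGraph.mem_neighborFinset])]
    ring
  · rw [Pi.single_eq_of_ne (Ne.symm hne), if_neg hne]
    by_cases hadj : G.Adj g g'
    · rw [if_pos (by simpa [SimpleGraph.mem_neighborFinset] using hadj), if_pos hadj]; ring
    · rw [if_neg (by simpa [SimpleGraph.mem_neighborFinset] using hadj), if_neg hadj]; ring

lemma refl_eq (g : V) (x : V → ℝ) :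
    reflV G g x = x - bform G g x • (Pi.single g 1 : V → ℝ) := by
  funext v
  simp only [reflV, bform, Pi.sub_apply, Pi.smul_apply, smul_eq_mul]
  rcases eq_or_ne v g with rfl | h
  · rw [if_pos rfl, Pi.single_eq_same]; ring
  · rw [if_neg h, Pi.single_eq_of_ne h]; ring

lemma refl_refl (g : V) (x : V → ℝ) : reflV G g (reflV G g x) = x := by
  rw [refl_eq G g x, refl_eq G g, bform_sub, bform_smul, bform_single, if_pos rfl]
  module

lemma refl_single_self (g : V) : reflV G g (Pi.single g (1:ℝ)) = -Pi.single g (1:ℝ) := by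
  rw [refl_eq, bform_single, if_pos rfl]
  module

lemma refl_single_adj {g g' : V} (h : G.Adj g g') :
    reflV G g (Pi.single g' (1:ℝ)) = Pi.single g' (1:ℝ) + Pi.single g (1:ℝ) := by
  rw [refl_eq, bform_single, if_neg (Ne.symm h.ne), if_pos h]
  module

lemma refl_single_nadj {g g' : V} (hne : g ≠ g') (h : ¬ G.Adj g g') :
    reflV G g (Pi.single g' (1:ℝ)) = Pi.single g' (1:ℝ) := by
  rw [refl_eq, bform_single, if_neg (Ne.symm hne), if_neg h]
  module

/-! ### The linear reflections -/

/-- The simple reflection as a linear endomorphism. -/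
def reflL (g : V) : Module.End ℝ (V → ℝ) where
  toFun := reflV G g
  map_add' x y := by
    show reflV G g (x + y) = reflV G g x + reflV G g y
    rw [refl_eq, refl_eq, refl_eq, bform_add]; module
  map_smul' c x := by
    show reflV G g (c • x) = c • reflV G g x
    rw [refl_eq, refl_eq, bform_smul]; module

@[simp] lemma reflL_apply (g : V) (x : V → ℝ) : reflL G g x = reflV G g x := rfl

/-- The commutation relation for non-adjacent vertices. -/
lemma refl_comm {i j : V} (hne : i ≠ j) (hna : ¬ G.Adj i j) (x : V → ℝ) :
    reflV G i (reflV G j x) = reflV G j (reflV G i x) := by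
  have hna' : ¬ G.Adj j i := fun h => hna h.symm
  have sij : bform G i (Pi.single j (1:ℝ)) = 0 := by
    rw [bform_single, if_neg (Ne.symm hne), if_neg hna]
  have sji : bform G j (Pi.single i (1:ℝ)) = 0 := by
    rw [bform_single, if_neg hne, if_neg hna']
  rw [refl_eq G j x, refl_eq G i x, refl_eq G i, refl_eq G j,
    bform_sub, bform_sub, bform_smul, bform_smul, sij, sji]
  module

/-- The braid relation for adjacent vertices. -/
lemma refl_braid {i j : V} (hadj : G.Adj i j) (x : V → ℝ) :
    reflV G i (reflV G j (reflV G i x)) = reflV G j (reflV G i (reflV G j x)) := by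
  have hne : i ≠ j := hadj.ne
  have sij : bform G i (Pi.single j (1:ℝ)) = -1 := by
    rw [bform_single, if_neg (Ne.symm hne), if_pos hadj]
  have sji : bform G j (Pi.single i (1:ℝ)) = -1 := by
    rw [bform_single, if_neg hne, if_pos hadj.symm]
  have sii : bform G i (Pi.single i (1:ℝ)) = 2 := by rw [bform_single, if_pos rfl]
  have sjj : bform G j (Pi.single j (1:ℝ)) = 2 := by rw [bform_single, if_pos rfl]
  have h1 : reflV G j (reflV G i x) =
      x - bform G i x • (Pi.single i 1 : V → ℝ)
        - (bform G j x + bform G i x) • (Pi.single j 1 : V → ℝ) := by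
    rw [refl_eq G i x, refl_eq G j, bform_sub, bform_smul, sji]
    module
  have h2 : reflV G i (reflV G j (reflV G i x)) =
      x - (bform G i x + bform G j x) • (Pi.single i 1 : V → ℝ)
        - (bform G i x + bform G j x) • (Pi.single j 1 : V → ℝ) := by
    rw [h1, refl_eq G i, bform_sub, bform_sub, bform_smul, bform_smul, sii, sij]
    module
  have h1' : reflV G i (reflV G j x) =
      x - bform G j x • (Pi.single j 1 : V → ℝ)
        - (bform G i x + bform G j x) • (Pi.single i 1 : V → ℝ) := by
    rw [refl_eq G j x, refl_eq G i, bform_sub, bform_smul, sij]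
    module
  have h2' : reflV G j (reflV G i (reflV G j x)) =
      x - (bform G j x + bform G i x) • (Pi.single j 1 : V → ℝ)
        - (bform G j x + bform G i x) • (Pi.single i 1 : V → ℝ) := by
    rw [h1', refl_eq G j, bform_sub, bform_sub, bform_smul, bform_smul, sjj, sji]
    module
  rw [h2, h2']
  module

/-! ### The Coxeter system -/

/-- The Coxeter matrix of the graph: 3 for adjacent vertices, 2 otherwise. -/
def coxM : CoxeterMatrix V where
  M := Matrix.of fun i j => if i = j then 1 else if G.Adj i j then 3 else 2
  isSymm := by
    ext i j
    simp only [Matrix.transpose_apply, Matrix.of_apply]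
    rcases eq_or_ne i j with rfl | hne
    · rfl
    · rw [if_neg (Ne.symm hne), if_neg hne]
      by_cases h : G.Adj i j
      · rw [if_pos h, if_pos h.symm]
      · rw [if_neg h, if_neg (fun hh => h hh.symm)]
  diagonal i := by simp [Matrix.of_apply]
  off_diagonal i j h := by
    simp only [Matrix.of_apply, if_neg h]
    split <;> omega

lemma coxM_self (i : V) : (coxM G) i i = 1 := by simp [coxM, Matrix.of_apply]

lemma coxM_adj {i j : V} (h : G.Adj i j) : (coxM G) i j = 3 := by
  show (Matrix.of _ : Matrix V V ℕ) i j = 3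
  rw [Matrix.of_apply, if_neg h.ne, if_pos h]

lemma coxM_nadj {i j : V} (hne : i ≠ j) (h : ¬ G.Adj i j) : (coxM G) i j = 2 := by
  show (Matrix.of _ : Matrix V V ℕ) i j = 2
  rw [Matrix.of_apply, if_neg hne, if_neg h]

/-- The Coxeter system. -/
noncomputable def cs : CoxeterSystem (coxM G) (coxM G).Group := (coxM G).toCoxeterSystem

lemma isLiftable : (coxM G).IsLiftable (fun g => reflL G g) := by
  intro i j
  rcases eq_or_ne i j with rfl | hne
  · rw [coxM_self, pow_one]
    apply LinearMap.ext
    intro x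
    exact refl_refl G i x
  · by_cases hadj : G.Adj i j
    · rw [coxM_adj G hadj]
      apply LinearMap.ext
      intro x
      show reflV G i (reflV G j (reflV G i (reflV G j (reflV G i (reflV G j x))))) = x
      rw [refl_braid G hadj (reflV G j x), refl_refl G j, refl_refl G j, refl_refl G i]
    · rw [coxM_nadj G hne hadj]
      apply LinearMap.ext
      intro x
      show reflV G i (reflV G j (reflV G i (reflV G j x))) = x
      rw [refl_comm G hne hadj x, refl_refl G j, refl_refl G i]

/-- The geometric representation. -/
noncomputable def rho : (coxM G).Group →* Module.End ℝ (V → ℝ) :=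
  (cs G).lift ⟨fun g => reflL G g, isLiftable G⟩

lemma rho_simple (i : V) : rho G ((cs G).simple i) = reflL G i :=
  (cs G).lift_apply_simple (isLiftable G) i

lemma rho_wordProd (l : List V) (x : V → ℝ) :
    rho G ((cs G).wordProd l) x = l.foldr (fun g z => reflV G g z) x := by
  induction l with
  | nil => rw [CoxeterSystem.wordProd_nil, map_one]; rfl
  | cons g l ih =>
    rw [CoxeterSystem.wordProd_cons, map_mul, Module.End.mul_apply, ih, rho_simple]
    rfl

/-! ### Tits' positivity theorem -/

theorem rho_nonneg : ∀ (n : ℕ) (w : (coxM G).Group) (i : V),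
    (cs G).length w = n → (cs G).length (w * (cs G).simple i) = n + 1 →
    ∀ v, 0 ≤ rho G w (Pi.single i 1) v := by
  intro n
  induction n using Nat.strong_induction_on with
  | _ n ih =>
  intro w i hw hwi v
  rcases Nat.eq_zero_or_pos n with rfl | hn
  · have : w = 1 := ((cs G).length_eq_zero_iff).mp hw
    subst this
    simp only [map_one, Module.End.one_apply]
    rcases eq_or_ne v i with rfl | h
    · rw [Pi.single_eq_same]; norm_num
    · rw [Pi.single_eq_of_ne h]
  · -- n ≥ 1
    have hwne : w ≠ 1 := by
      intro h; subst h; rw [(cs G).length_one] at hw; omega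
    obtain ⟨j, hj⟩ := (cs G).exists_rightDescent_of_ne_one hwne
    have hwj : (cs G).length (w * (cs G).simple j) = n - 1 := by
      rcases (cs G).length_mul_simple w j with h | h
      · exfalso; unfold CoxeterSystem.IsRightDescent at hj; omega
      · omega
    have hij : i ≠ j := by
      intro h; subst h
      unfold CoxeterSystem.IsRightDescent at hj
      omega
    set w1 := w * (cs G).simple j with hw1def
    have hww1 : w = w1 * (cs G).simple j := by
      rw [hw1def, (cs G).simple_mul_simple_cancel_right]
    have hlw1 : (cs G).length w1 = n - 1 := hwj
    rcases (cs G).length_mul_simple w1 i with hup | hdown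
    · -- length goes up: use induction on w1 directly
      have hA : ∀ u, 0 ≤ rho G w1 (Pi.single i 1) u := by
        apply ih (n-1) (by omega) w1 i hlw1
        rw [hup]; omega
      have hB : ∀ u, 0 ≤ rho G w1 (Pi.single j 1) u := by
        apply ih (n-1) (by omega) w1 j hlw1
        rw [← hww1, hw]
        omega
      rw [hww1, map_mul, Module.End.mul_apply, rho_simple, reflL_apply]
      by_cases hadj : G.Adj j i
      · rw [refl_single_adj G hadj, map_add]
        exact add_nonneg (hA v) (hB v)
      · rw [refl_single_nadj G (Ne.symm hij) hadj]
        exact hA v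
    · -- length goes down
      set w2 := w1 * (cs G).simple i with hw2def
      have hw1w2 : w1 = w2 * (cs G).simple i := by
        rw [hw2def, (cs G).simple_mul_simple_cancel_right]
      have hlw2 : (cs G).length w2 + 1 = n - 1 := by omega
      by_cases hadj : G.Adj i j
      · -- adjacent: braid relation
        rcases (cs G).length_mul_simple w2 j with h2up | h2down
        · -- use induction on w2
          have hC : ∀ u, 0 ≤ rho G w2 (Pi.single j 1) u := by
            apply ih ((cs G).length w2) (by omega) w2 j rfl
            rw [h2up]
          have key : reflV G i (reflV G j (Pi.single i 1)) = Pi.single j 1 := by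
            rw [refl_single_adj G hadj.symm, show (reflV G i) = (reflL G i : (V → ℝ) → (V → ℝ)) from rfl,
              map_add, reflL_apply, reflL_apply, refl_single_self G i, refl_single_adj G hadj]
            abel
          rw [hww1, hw1w2, map_mul, map_mul, Module.End.mul_apply, Module.End.mul_apply,
            rho_simple, rho_simple, reflL_apply, reflL_apply, key]
          exact hC v
        · -- contradiction by braid relation
          exfalso
          set w3 := w2 * (cs G).simple j with hw3def
          have hw2w3 : w2 = w3 * (cs G).simple j := by
            rw [hw3def, (cs G).simple_mul_simple_cancel_right]
          have hlw3 : (cs G).length w3 + 1 = (cs G).length w2 := h2down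
          have h3 : ((cs G).simple i * (cs G).simple j) ^ 3 = 1 := by
            have := (cs G).simple_mul_simple_pow i j
            rwa [coxM_adj G hadj] at this
          have h3r : (((cs G).simple j) * ((cs G).simple i)) ^ 3 = 1 := by
            have := (cs G).simple_mul_simple_pow j i
            rwa [coxM_adj G hadj.symm] at this
          have h3r' : (cs G).simple j * (cs G).simple i * ((cs G).simple j * (cs G).simple i)
              * ((cs G).simple j * (cs G).simple i) = 1 := by
            rw [← h3r, pow_succ, pow_succ, pow_one]
          have hXY : ((cs G).simple j * (cs G).simple i * (cs G).simple j) *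
              ((cs G).simple i * (cs G).simple j * (cs G).simple i) = 1 := by
            calc ((cs G).simple j * (cs G).simple i * (cs G).simple j) *
                ((cs G).simple i * (cs G).simple j * (cs G).simple i)
                = (cs G).simple j * (cs G).simple i * ((cs G).simple j * (cs G).simple i)
                  * ((cs G).simple j * (cs G).simple i) := by group
              _ = 1 := h3r'
          have hYY : ((cs G).simple i * (cs G).simple j * (cs G).simple i) *
              ((cs G).simple i * (cs G).simple j * (cs G).simple i) = 1 := by
            calc ((cs G).simple i * (cs G).simple j * (cs G).simple i) *
                ((cs G).simple i * (cs G).simple j * (cs G).simple i)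
                = (cs G).simple i * (cs G).simple j * ((cs G).simple i * (cs G).simple i)
                  * (cs G).simple j * (cs G).simple i := by group
              _ = (cs G).simple i * ((cs G).simple j * (cs G).simple j) * (cs G).simple i := by
                  rw [(cs G).simple_mul_simple_self]; group
              _ = (cs G).simple i * (cs G).simple i := by
                  rw [(cs G).simple_mul_simple_self]; group
              _ = 1 := (cs G).simple_mul_simple_self i
          have hbr : (cs G).simple j * (cs G).simple i * (cs G).simple j
              = (cs G).simple i * (cs G).simple j * (cs G).simple i := by
            rw [eq_inv_of_mul_eq_one_left hXY, inv_eq_of_mul_eq_one_right hYY]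
          have hkey : w * (cs G).simple i = w3 * (cs G).simple i * (cs G).simple j := by
            rw [hww1, hw1w2, hw2w3]
            calc w3 * (cs G).simple j * (cs G).simple i * (cs G).simple j * (cs G).simple i
                = w3 * ((cs G).simple j * (cs G).simple i * (cs G).simple j) * (cs G).simple i := by
                  group
              _ = w3 * ((cs G).simple i * (cs G).simple j * (cs G).simple i) * (cs G).simple i := by
                  rw [hbr]
              _ = w3 * ((cs G).simple i * (cs G).simple j) * ((cs G).simple i * (cs G).simple i) := by
                  group
              _ = w3 * ((cs G).simple i * (cs G).simple j) * 1 := by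
                  rw [(cs G).simple_mul_simple_self]
              _ = w3 * (cs G).simple i * (cs G).simple j := by group
          have hb1 : (cs G).length (w3 * (cs G).simple i) ≤ (cs G).length w3 + 1 := by
            have := (cs G).length_mul_le w3 ((cs G).simple i)
            rwa [(cs G).length_simple] at this
          have hb2 : (cs G).length (w3 * (cs G).simple i * (cs G).simple j)
              ≤ (cs G).length (w3 * (cs G).simple i) + 1 := by
            have := (cs G).length_mul_le (w3 * (cs G).simple i) ((cs G).simple j)
            rwa [(cs G).length_simple] at this
          rw [hkey] at hwi
          omega
      · -- non-adjacent: contradiction by commutation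
        exfalso
        have h2 : ((cs G).simple i * (cs G).simple j) ^ 2 = 1 := by
          have := (cs G).simple_mul_simple_pow i j
          rwa [coxM_nadj G hij hadj] at this
        have hcomm : (cs G).simple j * (cs G).simple i = (cs G).simple i * (cs G).simple j := by
          have h2' : (cs G).simple i * (cs G).simple j * ((cs G).simple i * (cs G).simple j) = 1 := by
            rw [← pow_two]; exact h2
          have : (cs G).simple i * (cs G).simple j = ((cs G).simple i * (cs G).simple j)⁻¹ :=
            eq_inv_of_mul_eq_one_right h2'
          rw [this, mul_inv_rev, (cs G).inv_simple, (cs G).inv_simple]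
        have hkey : w * (cs G).simple i = w2 * (cs G).simple j := by
          rw [hww1, hw1w2]
          calc w2 * (cs G).simple i * (cs G).simple j * (cs G).simple i
              = w2 * ((cs G).simple i * ((cs G).simple j * (cs G).simple i)) := by group
            _ = w2 * ((cs G).simple i * ((cs G).simple i * (cs G).simple j)) := by rw [hcomm]
            _ = w2 * (cs G).simple j := by
                rw [(cs G).simple_mul_simple_cancel_left]
        have hb1 : (cs G).length (w2 * (cs G).simple j) ≤ (cs G).length w2 + 1 := by
          have := (cs G).length_mul_le w2 ((cs G).simple j)
          rwa [(cs G).length_simple] at this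
        rw [hkey] at hwi
        omega

/-- Sign coherence of real roots. -/
theorem sign_coherent (w : (coxM G).Group) (i : V) :
    (∀ v, 0 ≤ rho G w (Pi.single i 1) v) ∨ (∀ v, rho G w (Pi.single i 1) v ≤ 0) := by
  rcases (cs G).length_mul_simple w i with hup | hdown
  · left
    exact rho_nonneg G ((cs G).length w) w i rfl hup
  · right
    set w' := w * (cs G).simple i with hw'def
    have hww' : w = w' * (cs G).simple i := by
      rw [hw'def, (cs G).simple_mul_simple_cancel_right]
    have hlen : (cs G).length (w' * (cs G).simple i) = (cs G).length w' + 1 := by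
      rw [← hww']; omega
    have hpos := rho_nonneg G ((cs G).length w') w' i rfl hlen
    intro v
    rw [hww', map_mul, Module.End.mul_apply, rho_simple, reflL_apply, refl_single_self,
      map_neg]
    simpa using hpos v

theorem foldr_sign (l : List V) (a : V) :
    (∀ v, 0 ≤ (l.foldr (fun g z => reflV G g z) (Pi.single a 1)) v) ∨
    (∀ v, (l.foldr (fun g z => reflV G g z) (Pi.single a 1)) v ≤ 0) := by
  have := sign_coherent G ((cs G).wordProd l) a
  rwa [rho_wordProd] at this

/-! ### The quadratic form and its invariance -/

/-- The symmetric bilinear form. -/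
def qform (x y : V → ℝ) : ℝ := ∑ v, x v * bform G v y

lemma qform_single_left (g : V) (y : V → ℝ) :
    qform G (Pi.single g (1:ℝ)) y = bform G g y := by
  unfold qform
  rw [Finset.sum_eq_single g]
  · rw [Pi.single_eq_same, one_mul]
  · intro u _ hu
    rw [Pi.single_eq_of_ne hu, zero_mul]
  · intro h; exact absurd (Finset.mem_univ g) h

lemma qform_single_right (g : V) (x : V → ℝ) :
    qform G x (Pi.single g (1:ℝ)) = bform G g x := by
  unfold qform
  have hterm : ∀ v : V, x v * bform G v (Pi.single g (1:ℝ))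
      = (if g = v then 2 * x v else 0) + (if G.Adj v g then -(x v) else 0) := by
    intro v
    rw [bform_single]
    rcases eq_or_ne g v with rfl | hne
    · rw [if_pos rfl, if_pos rfl, if_neg (G.irrefl), add_zero]; ring
    · rw [if_neg hne, if_neg hne]
      by_cases hadj : G.Adj v g
      · rw [if_pos hadj, if_pos hadj, zero_add]; ring
      · rw [if_neg hadj, if_neg hadj, add_zero, mul_zero]
  rw [Finset.sum_congr rfl (fun v _ => hterm v), Finset.sum_add_distrib,
    Finset.sum_ite_eq Finset.univ g (fun v => 2 * x v), if_pos (Finset.mem_univ g)]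
  have : ∑ v, (if G.Adj v g then -(x v) else 0) = -∑ h ∈ G.neighborFinset g, x h := by
    rw [← Finset.sum_filter, ← Finset.sum_neg_distrib]
    congr 1
    ext h
    simp [SimpleGraph.mem_neighborFinset, G.adj_comm]
  rw [this]
  unfold bform
  ring

lemma qform_sub_left (x x' y : V → ℝ) :
    qform G (x - x') y = qform G x y - qform G x' y := by
  unfold qform
  rw [← Finset.sum_sub_distrib]
  apply Finset.sum_congr rfl
  intro v _
  rw [Pi.sub_apply]; ring

lemma qform_smul_left (c : ℝ) (x y : V → ℝ) :
    qform G (c • x) y = c * qform G x y := by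
  unfold qform
  rw [Finset.mul_sum]
  apply Finset.sum_congr rfl
  intro v _
  rw [Pi.smul_apply, smul_eq_mul]; ring

lemma qform_sub_right (x y y' : V → ℝ) :
    qform G x (y - y') = qform G x y - qform G x y' := by
  unfold qform
  rw [← Finset.sum_sub_distrib]
  apply Finset.sum_congr rfl
  intro v _
  rw [bform_sub]; ring

lemma qform_smul_right (c : ℝ) (x y : V → ℝ) :
    qform G x (c • y) = c * qform G x y := by
  unfold qform
  rw [Finset.mul_sum]
  apply Finset.sum_congr rfl
  intro v _
  rw [bform_smul]; ring

lemma qform_refl (g : V) (x y : V → ℝ) :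
    qform G (reflV G g x) (reflV G g y) = qform G x y := by
  rw [refl_eq G g x, refl_eq G g y]
  simp only [qform_sub_left, qform_sub_right, qform_smul_left, qform_smul_right,
    qform_single_left, qform_single_right, bform_sub, bform_smul, bform_single,
    eq_self_iff_true, if_true]
  ring

lemma qform_foldr (l : List V) (x : V → ℝ) :
    qform G (l.foldr (fun g z => reflV G g z) x) (l.foldr (fun g z => reflV G g z) x)
      = qform G x x := by
  induction l with
  | nil => rfl
  | cons g l ih => rw [List.foldr_cons, qform_refl, ih]

lemma qform_single_single (a : V) :
    qform G (Pi.single a (1:ℝ)) (Pi.single a (1:ℝ)) = 2 := by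
  rw [qform_single_left, bform_single, if_pos rfl]

/-! ### The key step lemma -/

lemma step (P : V → Prop) [DecidablePred P]
    (hind : ∀ u w, G.Adj u w → P u → P w → False)
    (y : V → ℝ) (hy : ∀ u, 0 ≤ y u)
    (hr : ∃ (l : List V) (a : V), y = l.foldr (fun g z => reflV G g z) (Pi.single a 1))
    (v : V) (hneg : partCox G P y v < 0) :
    y = Pi.single v 1 := by
  obtain ⟨l, a, hla⟩ := hr
  have hPv : P v := by
    by_contra h
    have : partCox G P y v = y v := by simp [partCox, h]
    rw [this] at hneg
    exact absurd hneg (not_lt.mpr (hy v))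
  have hrv : reflV G v y v < 0 := by
    have h1 : partCox G P y v = -y v + ∑ h ∈ G.neighborFinset v, y h := by
      simp [partCox, hPv]
    have h2 : reflV G v y v = -y v + ∑ h ∈ G.neighborFinset v, y h := by
      simp [reflV]
    rw [h2, ← h1]; exact hneg
  have hfold : reflV G v y = (v :: l).foldr (fun g z => reflV G g z) (Pi.single a 1) := by
    rw [List.foldr_cons, ← hla]
  rcases foldr_sign G (v :: l) a with hpos | hneg2
  · exfalso
    have := hpos v
    rw [← hfold] at this
    exact absurd hrv (not_lt.mpr this)
  · have hzero : ∀ u, u ≠ v → y u = 0 := by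
      intro u hu
      have h1 : reflV G v y u ≤ 0 := by rw [hfold]; exact hneg2 u
      have h2 : reflV G v y u = y u := by simp [reflV, hu]
      rw [h2] at h1
      exact le_antisymm h1 (hy u)
    have hq : qform G y y = 2 := by
      rw [hla, qform_foldr, qform_single_single]
    have hsum0 : ∑ h ∈ G.neighborFinset v, y h = 0 := by
      apply Finset.sum_eq_zero
      intro h hh
      rw [SimpleGraph.mem_neighborFinset] at hh
      exact hzero h (fun he => (G.irrefl) (he ▸ hh))
    have hq2 : qform G y y = 2 * (y v) * (y v) := by
      unfold qform
      rw [Finset.sum_eq_single v]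
      · unfold bform
        rw [hsum0]
        ring
      · intro u _ hu
        rw [hzero u hu, zero_mul]
      · intro h; exact absurd (Finset.mem_univ v) h
    have hyv : y v = 1 := by
      have h1 : (y v - 1) * (y v + 1) = 0 := by nlinarith
      rcases mul_eq_zero.mp h1 with h | h
      · linarith
      · exfalso; have := hy v; linarith
    funext u
    rcases eq_or_ne u v with rfl | hu
    · rw [Pi.single_eq_same, hyv]
    · rw [Pi.single_eq_of_ne hu, hzero u hu]

/-! ### partCox and coxPos/coxNeg as words of reflections -/

lemma foldr_indep (P : V → Prop) [DecidablePred P]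
    (hind : ∀ u w, G.Adj u w → P u → P w → False) :
    ∀ (l : List V), l.Nodup → (∀ a ∈ l, P a) → ∀ (z : V → ℝ) (v : V),
      (l.foldr (fun g y => reflV G g y) z) v
        = if v ∈ l then -z v + ∑ h ∈ G.neighborFinset v, z h else z v := by
  intro l
  induction l with
  | nil => intro _ _ z v; simp
  | cons g l ih =>
    intro hnd hmem z v
    have hgl : g ∉ l := (List.nodup_cons.mp hnd).1
    have hnd' : l.Nodup := (List.nodup_cons.mp hnd).2
    have hmem' : ∀ a ∈ l, P a := fun a ha => hmem a (List.mem_cons_of_mem g ha)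
    have hPg : P g := hmem g (List.mem_cons_self)
    rw [List.foldr_cons]
    show reflV G g (l.foldr (fun g y => reflV G g y) z) v = _
    by_cases hvg : v = g
    · subst hvg
      have h1 : (l.foldr (fun g y => reflV G g y) z) v = z v := by
        rw [ih hnd' hmem', if_neg hgl]
      have h2 : ∀ h ∈ G.neighborFinset v, (l.foldr (fun g y => reflV G g y) z) h = z h := by
        intro h hh
        rw [SimpleGraph.mem_neighborFinset] at hh
        have hnl : h ∉ l := fun hl => hind v h hh hPg (hmem' h hl)
        rw [ih hnd' hmem', if_neg hnl]
      show (if v = v then -(l.foldr (fun g y => reflV G g y) z) v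
          + ∑ h ∈ G.neighborFinset v, (l.foldr (fun g y => reflV G g y) z) h else _) = _
      rw [if_pos rfl, if_pos (List.mem_cons_self), h1, Finset.sum_congr rfl h2]
    · show (if v = g then _ else (l.foldr (fun g y => reflV G g y) z) v) = _
      rw [if_neg hvg, ih hnd' hmem']
      by_cases hvl : v ∈ l
      · rw [if_pos hvl, if_pos (List.mem_cons_of_mem g hvl)]
      · rw [if_neg hvl, if_neg (by simp [List.mem_cons, hvg, hvl])]

lemma partCox_eq_foldr (P : V → Prop) [DecidablePred P]
    (hind : ∀ u w, G.Adj u w → P u → P w → False) :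
    ∃ l : List V, ∀ z : V → ℝ, partCox G P z = l.foldr (fun g y => reflV G g y) z := by
  refine ⟨(Finset.univ.filter P).toList, fun z => ?_⟩
  funext v
  rw [foldr_indep G P hind _ (Finset.nodup_toList _)
    (fun a ha => (Finset.mem_filter.mp (Finset.mem_toList.mp ha)).2) z v]
  have hmem : v ∈ (Finset.univ.filter P).toList ↔ P v := by
    rw [Finset.mem_toList, Finset.mem_filter]
    simp
  simp only [partCox]
  by_cases hv : P v
  · rw [if_pos hv, if_pos (hmem.mpr hv)]
  · rw [if_neg hv, if_neg (fun h => hv (hmem.mp h))]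

variable (odd : V → Prop) [DecidablePred odd]

lemma indep_odd (hbip : ∀ u v : V, G.Adj u v → (odd u ↔ ¬ odd v)) :
    ∀ u w, G.Adj u w → odd u → odd w → False :=
  fun u w h hu hw => ((hbip u w h).mp hu) hw

lemma indep_even (hbip : ∀ u v : V, G.Adj u v → (odd u ↔ ¬ odd v)) :
    ∀ u w, G.Adj u w → ¬ odd u → ¬ odd w → False :=
  fun u w h hu hw => hu ((hbip u w h).mpr hw)

lemma coxPos_foldr (hbip : ∀ u v : V, G.Adj u v → (odd u ↔ ¬ odd v)) (k : ℕ) :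
    ∃ l : List V, ∀ z : V → ℝ, coxPos G odd k z = l.foldr (fun g y => reflV G g y) z := by
  induction k with
  | zero => exact ⟨[], fun z => rfl⟩
  | succ k ih =>
    obtain ⟨l, hl⟩ := ih
    by_cases hk : Even k
    · obtain ⟨lp, hlp⟩ := partCox_eq_foldr G odd (indep_odd G odd hbip)
      refine ⟨lp ++ l, fun z => ?_⟩
      have : coxPos G odd (k+1) z = partCox G odd (coxPos G odd k z) := by
        simp [coxPos, hk]
      rw [this, hl, hlp, List.foldr_append]
    · obtain ⟨lp, hlp⟩ := partCox_eq_foldr G (fun v => ¬ odd v) (indep_even G odd hbip)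
      refine ⟨lp ++ l, fun z => ?_⟩
      have : coxPos G odd (k+1) z = partCox G (fun v => ¬ odd v) (coxPos G odd k z) := by
        simp [coxPos, hk]
      rw [this, hl, hlp, List.foldr_append]

lemma coxNeg_foldr (hbip : ∀ u v : V, G.Adj u v → (odd u ↔ ¬ odd v)) (k : ℕ) :
    ∃ l : List V, ∀ z : V → ℝ, coxNeg G odd k z = l.foldr (fun g y => reflV G g y) z := by
  induction k with
  | zero => exact ⟨[], fun z => rfl⟩
  | succ k ih =>
    obtain ⟨l, hl⟩ := ih
    by_cases hk : Even k
    · obtain ⟨lp, hlp⟩ := partCox_eq_foldr G (fun v => ¬ odd v) (indep_even G odd hbip)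
      refine ⟨lp ++ l, fun z => ?_⟩
      have : coxNeg G odd (k+1) z = partCox G (fun v => ¬ odd v) (coxNeg G odd k z) := by
        simp [coxNeg, hk]
      rw [this, hl, hlp, List.foldr_append]
    · obtain ⟨lp, hlp⟩ := partCox_eq_foldr G odd (indep_odd G odd hbip)
      refine ⟨lp ++ l, fun z => ?_⟩
      have : coxNeg G odd (k+1) z = partCox G odd (coxNeg G odd k z) := by
        simp [coxNeg, hk]
      rw [this, hl, hlp, List.foldr_append]

/-! ### Inverses of the partial Coxeter words -/

lemma partCox_partCox (P : V → Prop) [DecidablePred P]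
    (hind : ∀ u w, G.Adj u w → P u → P w → False) (x : V → ℝ) :
    partCox G P (partCox G P x) = x := by
  funext v
  show (if P v then -(partCox G P x) v + ∑ h ∈ G.neighborFinset v, (partCox G P x) h
      else (partCox G P x) v) = x v
  by_cases hv : P v
  · rw [if_pos hv]
    have h1 : partCox G P x v = -x v + ∑ h ∈ G.neighborFinset v, x h := by
      simp [partCox, hv]
    have h2 : ∀ h ∈ G.neighborFinset v, partCox G P x h = x h := by
      intro h hh
      rw [SimpleGraph.mem_neighborFinset] at hh
      have : ¬ P h := fun hPh => hind v h hh hv hPh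
      simp [partCox, this]
    rw [h1, Finset.sum_congr rfl h2]
    ring
  · rw [if_neg hv]
    simp [partCox, hv]

lemma coxPos_right (k : ℕ) :
    coxPos G odd (k+1) = coxNeg G odd k ∘ partCox G odd := by
  induction k with
  | zero =>
    funext x
    simp [coxPos, coxNeg]
  | succ k ih =>
    have hpar : (if Even (k+1) then partCox G odd else partCox G (fun v => ¬ odd v))
        = (if Even k then partCox G (fun v => ¬ odd v) else partCox G odd) := by
      by_cases hk : Even k
      · rw [if_neg (by simp [Nat.even_add_one, hk]), if_pos hk]
      · rw [if_pos (by simp [Nat.even_add_one, hk]), if_neg hk]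
    show (if Even (k+1) then partCox G odd else partCox G (fun v => ¬ odd v)) ∘
        coxPos G odd (k+1) = (if Even k then partCox G (fun v => ¬ odd v) else partCox G odd) ∘
        coxNeg G odd k ∘ partCox G odd
    rw [ih, hpar]

lemma coxNeg_right (k : ℕ) :
    coxNeg G odd (k+1) = coxPos G odd k ∘ partCox G (fun v => ¬ odd v) := by
  induction k with
  | zero =>
    funext x
    simp [coxPos, coxNeg]
  | succ k ih =>
    have hpar : (if Even (k+1) then partCox G (fun v => ¬ odd v) else partCox G odd)
        = (if Even k then partCox G odd else partCox G (fun v => ¬ odd v)) := by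
      by_cases hk : Even k
      · rw [if_neg (by simp [Nat.even_add_one, hk]), if_pos hk]
      · rw [if_pos (by simp [Nat.even_add_one, hk]), if_neg hk]
    show (if Even (k+1) then partCox G (fun v => ¬ odd v) else partCox G odd) ∘
        coxNeg G odd (k+1) = (if Even k then partCox G odd else partCox G (fun v => ¬ odd v)) ∘
        coxPos G odd k ∘ partCox G (fun v => ¬ odd v)
    rw [ih, hpar]

lemma cox_inverse (hbip : ∀ u v : V, G.Adj u v → (odd u ↔ ¬ odd v)) : ∀ m : ℕ,
    (∀ x, (if Odd m then coxPos G odd m else coxNeg G odd m) (coxPos G odd m x) = x) ∧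
    (∀ x, (if Odd m then coxNeg G odd m else coxPos G odd m) (coxNeg G odd m x) = x) := by
  have hco : ∀ x, partCox G odd (partCox G odd x) = x :=
    partCox_partCox G odd (indep_odd G odd hbip)
  have hce : ∀ x, partCox G (fun v => ¬ odd v) (partCox G (fun v => ¬ odd v) x) = x :=
    partCox_partCox G (fun v => ¬ odd v) (indep_even G odd hbip)
  intro m
  induction m with
  | zero => exact ⟨fun x => by simp [coxPos, coxNeg], fun x => by simp [coxPos, coxNeg]⟩
  | succ m ih =>
    by_cases hm : Even m
    · have hodd1 : Odd (m+1) := Even.add_one hm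
      have hnoddm : ¬ Odd m := by simpa [Nat.not_odd_iff_even] using hm
      constructor
      · intro x
        rw [if_pos hodd1]
        have e2 : coxPos G odd (m+1) x = partCox G odd (coxPos G odd m x) := by
          simp [coxPos, hm]
        rw [e2]
        have e1 : coxPos G odd (m+1) (partCox G odd (coxPos G odd m x))
            = coxNeg G odd m (partCox G odd (partCox G odd (coxPos G odd m x))) := by
          rw [coxPos_right]; rfl
        rw [e1, hco]
        have := ih.1 x
        rwa [if_neg hnoddm] at this
      · intro x
        rw [if_pos hodd1]
        have e2 : coxNeg G odd (m+1) x = partCox G (fun v => ¬ odd v) (coxNeg G odd m x) := by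
          simp [coxNeg, hm]
        rw [e2]
        have e1 : coxNeg G odd (m+1) (partCox G (fun v => ¬ odd v) (coxNeg G odd m x))
            = coxPos G odd m (partCox G (fun v => ¬ odd v)
                (partCox G (fun v => ¬ odd v) (coxNeg G odd m x))) := by
          rw [coxNeg_right]; rfl
        rw [e1, hce]
        have := ih.2 x
        rwa [if_neg hnoddm] at this
    · have hoddm : Odd m := Nat.not_even_iff_odd.mp hm
      have hnodd1 : ¬ Odd (m+1) := by simp [Nat.odd_add_one, hoddm]
      constructor
      · intro x
        rw [if_neg hnodd1]
        have e2 : coxPos G odd (m+1) x = partCox G (fun v => ¬ odd v) (coxPos G odd m x) := by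
          simp [coxPos, hm]
        rw [e2]
        have e1 : coxNeg G odd (m+1) (partCox G (fun v => ¬ odd v) (coxPos G odd m x))
            = coxPos G odd m (partCox G (fun v => ¬ odd v)
                (partCox G (fun v => ¬ odd v) (coxPos G odd m x))) := by
          rw [coxNeg_right]; rfl
        rw [e1, hce]
        have := ih.1 x
        rwa [if_pos hoddm] at this
      · intro x
        rw [if_neg hnodd1]
        have e2 : coxNeg G odd (m+1) x = partCox G odd (coxNeg G odd m x) := by
          simp [coxNeg, hm]
        rw [e2]
        have e1 : coxPos G odd (m+1) (partCox G odd (coxNeg G odd m x))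
            = coxNeg G odd m (partCox G odd (partCox G odd (coxNeg G odd m x))) := by
          rw [coxPos_right]; rfl
        rw [e1, hco]
        have := ih.2 x
        rwa [if_pos hoddm] at this

end Stmt18Aux

open Stmt18Aux

/-- If d is a positive real root of a finite connected bipartite graph which is
singular (some c_t(d) has a negative coordinate), then d = c_t(ē_g) for some
t ∈ ℤ and some vertex g. -/
theorem stmt_18 (V : Type) [Fintype V] [DecidableEq V]
    (G : SimpleGraph V) [DecidableRel G.Adj] (hG : G.Connected)
    (odd : V → Prop) [DecidablePred odd]
    (hbip : ∀ u v : V, G.Adj u v → (odd u ↔ ¬ odd v))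
    (d : V → ℝ)
    (hroot : ∃ (l : List V) (a : V),
      d = l.foldr (fun g z => reflV G g z) (Pi.single a 1))
    (hpos : d ≠ 0) (hnonneg : ∀ v, 0 ≤ d v)
    (hsing : ∃ (t : ℤ) (v : V), coxZ G odd t d v < 0) :
    ∃ (t : ℤ) (g : V), d = coxZ G odd t (Pi.single g 1) := by
  classical
  obtain ⟨l0, a0, hd⟩ := hroot
  obtain ⟨t, v0, hv0⟩ := hsing
  cases t with
  | ofNat k =>
    have hS : ∃ k : ℕ, ∃ u, coxPos G odd k d u < 0 := ⟨k, v0, hv0⟩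
    obtain ⟨u0, hu0⟩ : ∃ u, coxPos G odd (Nat.find hS) d u < 0 := Nat.find_spec hS
    have hN1 : 1 ≤ Nat.find hS := by
      by_contra h
      push_neg at h
      have h0 : Nat.find hS = 0 := by omega
      rw [h0] at hu0
      have : coxPos G odd 0 d u0 = d u0 := rfl
      rw [this] at hu0
      exact absurd hu0 (not_lt.mpr (hnonneg u0))
    set m := Nat.find hS - 1 with hm
    have hNm : Nat.find hS = m + 1 := by omega
    have hy : ∀ u, 0 ≤ coxPos G odd m d u := by
      intro u
      by_contra h
      push_neg at h
      exact Nat.find_min hS (show m < Nat.find hS by omega) ⟨u, h⟩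
    have hroot_y : ∃ (l : List V) (a : V),
        coxPos G odd m d = l.foldr (fun g z => reflV G g z) (Pi.single a 1) := by
      obtain ⟨lc, hlc⟩ := coxPos_foldr G odd hbip m
      exact ⟨lc ++ l0, a0, by rw [hd, hlc, List.foldr_append]⟩
    have hstep : coxPos G odd (Nat.find hS) d
        = (if Even m then partCox G odd else partCox G (fun v => ¬ odd v))
            (coxPos G odd m d) := by
      rw [hNm]; rfl
    have hy1 : coxPos G odd m d = Pi.single u0 1 := by
      by_cases hEm : Even m
      · have hneg : partCox G odd (coxPos G odd m d) u0 < 0 := by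
          have h := hu0
          rw [hstep, if_pos hEm] at h
          exact h
        exact step G odd (indep_odd G odd hbip) _ hy hroot_y u0 hneg
      · have hneg : partCox G (fun v => ¬ odd v) (coxPos G odd m d) u0 < 0 := by
          have h := hu0
          rw [hstep, if_neg hEm] at h
          exact h
        exact step G (fun v => ¬ odd v) (indep_even G odd hbip) _ hy hroot_y u0 hneg
    have hinv := (cox_inverse G odd hbip m).1 d
    rw [hy1] at hinv
    by_cases hOm : Odd m
    · rw [if_pos hOm] at hinv
      exact ⟨Int.ofNat m, u0, hinv.symm⟩
    · rw [if_neg hOm] at hinv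
      match m, hinv with
      | 0, hinv => exact ⟨Int.ofNat 0, u0, hinv.symm⟩
      | (m'+1), hinv => exact ⟨Int.negSucc m', u0, hinv.symm⟩
  | negSucc k =>
    have hS : ∃ k : ℕ, ∃ u, coxNeg G odd k d u < 0 := ⟨k + 1, v0, hv0⟩
    obtain ⟨u0, hu0⟩ : ∃ u, coxNeg G odd (Nat.find hS) d u < 0 := Nat.find_spec hS
    have hN1 : 1 ≤ Nat.find hS := by
      by_contra h
      push_neg at h
      have h0 : Nat.find hS = 0 := by omega
      rw [h0] at hu0
      have : coxNeg G odd 0 d u0 = d u0 := rfl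
      rw [this] at hu0
      exact absurd hu0 (not_lt.mpr (hnonneg u0))
    set m := Nat.find hS - 1 with hm
    have hNm : Nat.find hS = m + 1 := by omega
    have hy : ∀ u, 0 ≤ coxNeg G odd m d u := by
      intro u
      by_contra h
      push_neg at h
      exact Nat.find_min hS (show m < Nat.find hS by omega) ⟨u, h⟩
    have hroot_y : ∃ (l : List V) (a : V),
        coxNeg G odd m d = l.foldr (fun g z => reflV G g z) (Pi.single a 1) := by
      obtain ⟨lc, hlc⟩ := coxNeg_foldr G odd hbip m
      exact ⟨lc ++ l0, a0, by rw [hd, hlc, List.foldr_append]⟩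
    have hstep : coxNeg G odd (Nat.find hS) d
        = (if Even m then partCox G (fun v => ¬ odd v) else partCox G odd)
            (coxNeg G odd m d) := by
      rw [hNm]; rfl
    have hy1 : coxNeg G odd m d = Pi.single u0 1 := by
      by_cases hEm : Even m
      · have hneg : partCox G (fun v => ¬ odd v) (coxNeg G odd m d) u0 < 0 := by
          have h := hu0
          rw [hstep, if_pos hEm] at h
          exact h
        exact step G (fun v => ¬ odd v) (indep_even G odd hbip) _ hy hroot_y u0 hneg
      · have hneg : partCox G odd (coxNeg G odd m d) u0 < 0 := by
          have h := hu0
          rw [hstep, if_neg hEm] at h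
          exact h
        exact step G odd (indep_odd G odd hbip) _ hy hroot_y u0 hneg
    have hinv := (cox_inverse G odd hbip m).2 d
    rw [hy1] at hinv
    by_cases hOm : Odd m
    · rw [if_pos hOm] at hinv
      match m, hOm, hinv with
      | (m'+1), _, hinv => exact ⟨Int.negSucc m', u0, hinv.symm⟩
      | 0, hOm, _ => exact absurd hOm (by simp)
    · rw [if_neg hOm] at hinv
      exact ⟨Int.ofNat m, u0, hinv.symm⟩
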